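/- Every nonzero sub-bimodule of L(V,W) (simultaneously a left L(W)-submodule and right L(V)-submodule) contains every finite-rank linear transformation from V to W. In particular, if V or W is finite-dimensional, the only sub-bimodules of L(V,W) are 0 and L(V,W). -/

import Mathlib

variable {D V W : Type*} [DivisionRing D]
  [AddCommGroup V] [Module D V] [AddCommGroup W] [Module D W]

/-- `I` is a sub-bimodule of `L(V,W)`: closed under addition, under left
composition with endomorphisms of `W`, and under right composition with
endomorphisms of `V`. -/
def IsBiSubmodule (I : Set (V →ₗ[D] W)) : Prop :=
  (0 : V →ₗ[D] W) ∈ I ∧ (∀ S T : V →ₗ[D] W, S ∈ I → T ∈ I → S + T ∈ I) ∧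
    (∀ S ∈ I, ∀ A : W →ₗ[D] W, A.comp S ∈ I) ∧
    (∀ S ∈ I, ∀ A : V →ₗ[D] V, S.comp A ∈ I)

lemma exists_dual_one {y : W} (hy : y ≠ 0) : ∃ g : W →ₗ[D] D, g y = 1 := by
  have hli := LinearIndepOn.singleton (R := D) (v := id) hy
  let b := Module.Basis.extend hli
  have hmem : y ∈ hli.extend (Set.subset_univ _) :=
    hli.subset_extend (Set.subset_univ _) rfl
  refine ⟨b.coord ⟨y, hmem⟩, ?_⟩
  have hb : b ⟨y, hmem⟩ = y := Module.Basis.extend_apply_self hli ⟨y, hmem⟩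
  have h2 := congrArg b.repr hb
  rw [Module.Basis.repr_self] at h2
  rw [Module.Basis.coord_apply, ← h2, Finsupp.single_eq_same]

lemma rankOne_mem {I : Set (V →ₗ[D] W)} (hI : IsBiSubmodule I)
    (hne : ∃ T ∈ I, T ≠ 0) (f : V →ₗ[D] D) (w : W) :
    (LinearMap.toSpanSingleton D W w).comp f ∈ I := by
  obtain ⟨S, hS, hS0⟩ := hne
  obtain ⟨v0, hv0⟩ : ∃ v0, S v0 ≠ 0 := by
    by_contra h
    push_neg at h
    exact hS0 (LinearMap.ext fun v => h v)
  obtain ⟨g, hg⟩ := exists_dual_one (D := D) hv0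
  have hmem : (((LinearMap.toSpanSingleton D W w).comp g).comp
      (S.comp ((LinearMap.toSpanSingleton D V v0).comp f))) ∈ I := by
    obtain ⟨_, _, hleft, hright⟩ := hI
    exact hleft _ (hright S hS _) _
  convert hmem using 1
  ext x
  simp [LinearMap.toSpanSingleton_apply, map_smul, hg]

theorem stmt_18 :
    (∀ I : Set (V →ₗ[D] W), IsBiSubmodule I → (∃ T ∈ I, T ≠ 0) →
      ∀ T : V →ₗ[D] W, FiniteDimensional D (LinearMap.range T) → T ∈ I) ∧
    ((FiniteDimensional D V ∨ FiniteDimensional D W) →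
      ∀ I : Set (V →ₗ[D] W), IsBiSubmodule I → I = {0} ∨ I = Set.univ) := by
  have main : ∀ I : Set (V →ₗ[D] W), IsBiSubmodule I → (∃ T ∈ I, T ≠ 0) →
      ∀ T : V →ₗ[D] W, FiniteDimensional D (LinearMap.range T) → T ∈ I := by
    intro I hI hne T hT
    set R := LinearMap.range T
    let b := Module.finBasis D R
    have hTeq : T = ∑ i, (LinearMap.toSpanSingleton D W (b i : W)).comp
        ((b.coord i).comp T.rangeRestrict) := by
      ext x
      have h1 : (T x : W) = ((T.rangeRestrict x : R) : W) := rfl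
      rw [h1]
      conv_lhs => rw [← b.sum_repr (T.rangeRestrict x)]
      push_cast
      simp [LinearMap.toSpanSingleton_apply, Module.Basis.coord_apply]
    rw [hTeq]
    refine Finset.sum_induction _ (· ∈ I) (fun a c ha hc => hI.2.1 a c ha hc) hI.1 ?_
    intro i _
    exact rankOne_mem hI hne _ _
  refine ⟨main, fun hfd I hI => ?_⟩
  by_cases h : ∃ T ∈ I, T ≠ 0
  · right
    ext T
    simp only [Set.mem_univ, iff_true]
    refine main I hI h T ?_
    rcases hfd with hV | hW
    · exact Module.Finite.range T
    · infer_instance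
  · left
    ext T
    simp only [Set.mem_singleton_iff]
    constructor
    · intro hT
      by_contra hT0
      exact h ⟨T, hT, hT0⟩
    · rintro rfl; exact hI.1
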